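/- arXiv:1102.2250 — 2 statements merged into one kernel-verified Lean document; each statement's English description precedes it below -/
import Mathlib

section
/- Let K_n, p_n, c_n be as in the scaling condition p_n(2K_n − K_n²/(n−1)) = c_n log n with c_n → c > 0, and suppose p_n → p* ∈ [0,1]. Define α_n = (1−c_n) log n + K_n(p_n + log(1−p_n)). If c > τ(p*) then α_n → −∞, and if c < τ(p*) then α_n → +∞, where τ is the threshold function τ(0)=1, τ(p)=2/(1−log(1−p)/p) for 0<p<1, τ(1)=0. -/
open Filter Topology

noncomputable def tau (p : ℝ) : ℝ :=
  if p = 0 then 1 else if p = 1 then 0 else 2 / (1 - Real.log (1 - p) / p)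

private lemma logN_tendsto : Tendsto (fun n : ℕ => Real.log n) atTop atTop :=
  Real.tendsto_log_atTop.comp tendsto_natCast_atTop_atTop

private lemma log_one_sub_bounds {x : ℝ} (h0 : 0 < x) (h1 : x < 1) :
    -(x / (1 - x)) ≤ Real.log (1 - x) ∧ Real.log (1 - x) ≤ -x := by
  have hx : 0 < 1 - x := by linarith
  constructor
  · have h := Real.log_le_sub_one_of_pos (inv_pos.mpr hx)
    rw [Real.log_inv] at h
    have h2 : (1 - x)⁻¹ - 1 = x / (1 - x) := by field_simp; ring
    linarith
  · have h := Real.log_le_sub_one_of_pos hx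
    linarith

private lemma basic_facts (K : ℕ → ℕ) (p c : ℕ → ℝ)
    (hK : ∀ n, 2 ≤ n → 1 ≤ K n ∧ K n < n)
    (hp : ∀ n, p n ∈ Set.Ioo (0:ℝ) 1)
    (hscale : ∀ n, 2 ≤ n →
      p n * (2 * (K n : ℝ) - (K n : ℝ) ^ 2 / ((n : ℝ) - 1)) = c n * Real.log n)
    (n : ℕ) (hn : 2 ≤ n) :
    0 < Real.log n ∧ 0 < c n ∧ (K n : ℝ) * p n ≤ c n * Real.log n ∧
      c n * Real.log n ≤ 2 * ((K n : ℝ) * p n) := by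
  obtain ⟨hK1, hK2⟩ := hK n hn
  obtain ⟨hp0, hp1⟩ := hp n
  have hn2 : (2:ℝ) ≤ (n:ℝ) := by exact_mod_cast hn
  have hn1 : (1:ℝ) ≤ (n:ℝ) - 1 := by linarith
  have hk1 : (1:ℝ) ≤ (K n : ℝ) := by exact_mod_cast hK1
  have hk2 : (K n : ℝ) ≤ (n:ℝ) - 1 := by
    have : ((K n : ℝ)) + 1 ≤ (n:ℝ) := by exact_mod_cast hK2
    linarith
  have hlog : 0 < Real.log n := Real.log_pos (by linarith)
  have hs := hscale n hn
  have ht1 : (K n : ℝ) ^ 2 / ((n:ℝ) - 1) ≤ (K n : ℝ) := by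
    rw [div_le_iff₀ (by linarith)]
    nlinarith
  have ht0 : 0 ≤ (K n : ℝ) ^ 2 / ((n:ℝ) - 1) := by positivity
  have hclog : 0 < c n * Real.log n := by nlinarith
  have hcn : 0 < c n := by
    rcases mul_pos_iff.mp hclog with ⟨h, _⟩ | ⟨_, h⟩
    · exact h
    · linarith
  refine ⟨hlog, hcn, by nlinarith, by nlinarith⟩

private lemma mul_log_atBot {g : ℕ → ℝ} {L : ℝ} (hL : L < 0)
    (hg : Tendsto g atTop (𝓝 L)) :
    Tendsto (fun n : ℕ => Real.log n * g n) atTop atBot := by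
  have h2 : Tendsto (fun n : ℕ => Real.log n * (L / 2)) atTop atBot :=
    logN_tendsto.atTop_mul_const_of_neg (by linarith)
  refine tendsto_atBot_mono' atTop ?_ h2
  filter_upwards [hg.eventually_le_const (show L < L / 2 by linarith),
    eventually_ge_atTop 2] with n h1 hn
  have hn2 : (2:ℝ) ≤ (n:ℝ) := by exact_mod_cast hn
  have hl : 0 ≤ Real.log n := Real.log_nonneg (by linarith)
  nlinarith

private lemma mul_log_atTop {g : ℕ → ℝ} {L : ℝ} (hL : 0 < L)
    (hg : Tendsto g atTop (𝓝 L)) :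
    Tendsto (fun n : ℕ => Real.log n * g n) atTop atTop := by
  have h2 : Tendsto (fun n : ℕ => Real.log n * (L / 2)) atTop atTop :=
    logN_tendsto.atTop_mul_const (by linarith)
  refine tendsto_atTop_mono' atTop ?_ h2
  filter_upwards [hg.eventually_const_le (show L / 2 < L by linarith),
    eventually_ge_atTop 2] with n h1 hn
  have hn2 : (2:ℝ) ≤ (n:ℝ) := by exact_mod_cast hn
  have hl : 0 ≤ Real.log n := Real.log_nonneg (by linarith)
  nlinarith

set_option maxHeartbeats 1000000 in
theorem alpha_n_limits (K : ℕ → ℕ) (p c : ℕ → ℝ) (cc pstar : ℝ) (hcc : 0 < cc)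
    (hK : ∀ n, 2 ≤ n → 1 ≤ K n ∧ K n < n)
    (hp : ∀ n, p n ∈ Set.Ioo (0:ℝ) 1)
    (hscale : ∀ n, 2 ≤ n →
      p n * (2 * (K n : ℝ) - (K n : ℝ) ^ 2 / ((n : ℝ) - 1)) = c n * Real.log n)
    (hc : Filter.Tendsto c Filter.atTop (nhds cc))
    (hps : pstar ∈ Set.Icc (0:ℝ) 1)
    (hplim : Filter.Tendsto p Filter.atTop (nhds pstar)) :
    (cc > tau pstar →
      Filter.Tendsto
        (fun n : ℕ => (1 - c n) * Real.log n + (K n : ℝ) * (p n + Real.log (1 - p n)))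
        Filter.atTop Filter.atBot)
    ∧ (cc < tau pstar →
      Filter.Tendsto
        (fun n : ℕ => (1 - c n) * Real.log n + (K n : ℝ) * (p n + Real.log (1 - p n)))
        Filter.atTop Filter.atTop) := by
  have hfacts := basic_facts K p c hK hp hscale
  set f : ℕ → ℝ := fun n => 1 + Real.log (1 - p n) / p n with hf_def
  set g : ℕ → ℝ := fun n => (1 - c n) + ((K n : ℝ) * p n / Real.log n) * f n with hg_def
  -- f n ≤ 0 always
  have hfle : ∀ n, f n ≤ 0 := by
    intro n
    obtain ⟨hp0, hp1⟩ := hp n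
    have hb := (log_one_sub_bounds hp0 hp1).2
    have : Real.log (1 - p n) / p n ≤ -1 := by
      rw [div_le_iff₀ hp0]; linarith
    simp only [hf_def]; linarith
  have heq : (fun n : ℕ => Real.log n * g n) =ᶠ[atTop]
      (fun n : ℕ => (1 - c n) * Real.log n + (K n : ℝ) * (p n + Real.log (1 - p n))) := by
    filter_upwards [eventually_ge_atTop 2] with n hn
    obtain ⟨hlog, -, -, -⟩ := hfacts n hn
    have h1 : Real.log n ≠ 0 := ne_of_gt hlog
    have h2 : p n ≠ 0 := ne_of_gt (hp n).1
    simp only [hg_def, hf_def]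
    field_simp
  clear_value f g
  rcases eq_or_lt_of_le hps.2 with hps1 | hps1
  · -- pstar = 1
    subst hps1
    have htau : tau 1 = 0 := by norm_num [tau]
    constructor
    · intro _
      -- α → -∞
      -- f n → -∞
      have hlogbot : Tendsto (fun n => Real.log (1 - p n)) atTop atBot := by
        apply Real.tendsto_log_nhdsNE_zero.comp
        apply tendsto_nhdsWithin_of_tendsto_nhds_of_eventually_within
        · have h : Tendsto (fun n => 1 - p n) atTop (𝓝 ((1:ℝ) - 1)) :=
            tendsto_const_nhds.sub hplim
          simpa using h
        · filter_upwards with n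
          have := (hp n).2
          simp only [Set.mem_compl_iff, Set.mem_singleton_iff]
          intro h; rw [sub_eq_zero] at h; exact absurd h.symm (ne_of_lt this)
      have hfbot : Tendsto f atTop atBot := by
        refine tendsto_atBot_mono' atTop ?_
          (tendsto_atBot_add_const_left atTop 1 hlogbot)
        filter_upwards with n
        obtain ⟨hp0, hp1⟩ := hp n
        have hln : Real.log (1 - p n) ≤ 0 := Real.log_nonpos (by linarith) (by linarith)
        have : Real.log (1 - p n) / p n ≤ Real.log (1 - p n) := by
          rw [div_le_iff₀ hp0]; nlinarith
        simp only [hf_def]; linarith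
      set B : ℕ → ℝ := fun n => (1 - c n) + c n / 2 * f n with hB_def
      clear_value B
      have hB : Tendsto B atTop atBot := by
        have haux : Tendsto (fun n : ℕ => (1 - c n) + cc / 4 * f n) atTop atBot :=
          ((tendsto_const_nhds : Tendsto (fun _ : ℕ => (1:ℝ)) atTop (𝓝 1)).sub hc).add_atBot
            (hfbot.const_mul_atBot (show (0:ℝ) < cc / 4 by linarith))
        refine tendsto_atBot_mono' atTop ?_ haux
        filter_upwards [hc.eventually_const_le (show cc / 2 < cc by linarith)] with n hn
        have hf0 := hfle n
        simp only [hB_def]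
        nlinarith
      refine tendsto_atBot_mono' atTop ?_ hB
      filter_upwards [eventually_ge_atTop 2, hB.eventually (eventually_le_atBot 0),
        logN_tendsto.eventually (eventually_ge_atTop 1)] with n hn hB0 hl1
      obtain ⟨hlog, hcn, hub, hlb⟩ := hfacts n hn
      obtain ⟨hp0, hp1⟩ := hp n
      have hf0 := hfle n
      have hpf : p n + Real.log (1 - p n) = p n * f n := by
        simp only [hf_def]; field_simp
      rw [hpf]
      have hkp : c n * Real.log n / 2 ≤ (K n : ℝ) * p n := by linarith
      have h1 : (K n : ℝ) * (p n * f n) ≤ c n * Real.log n / 2 * f n := by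
        have := mul_le_mul_of_nonpos_right hkp hf0
        nlinarith
      have h2 : (1 - c n) * Real.log n + c n * Real.log n / 2 * f n
          = Real.log n * B n := by simp only [hB_def]; ring
      have h3 : Real.log n * B n ≤ B n := by nlinarith
      nlinarith
    · intro h
      rw [htau] at h
      exact absurd hcc (by linarith)
  · -- pstar < 1
    have hL : ∃ L : ℝ, Tendsto g atTop (𝓝 L) ∧ (cc > tau pstar → L < 0) ∧
        (cc < tau pstar → 0 < L) := by
      rcases eq_or_lt_of_le hps.1 with hps0 | hps0
      · -- pstar = 0
        subst hps0
        have htau : tau 0 = 1 := by norm_num [tau]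
        -- f n → 0 by squeeze
        have hf0 : Tendsto f atTop (𝓝 0) := by
          have hub : Tendsto (fun n => p n / (1 - p n)) atTop (𝓝 0) := by
            have h := hplim.div (tendsto_const_nhds.sub hplim)
              (show (1:ℝ) - 0 ≠ 0 by norm_num)
            exact (by simpa using h : Tendsto (p / fun x => 1 - p x) atTop (𝓝 0))
          refine tendsto_of_tendsto_of_tendsto_of_le_of_le'
            (by simpa using hub.neg) tendsto_const_nhds ?_ ?_
          · filter_upwards with n
            obtain ⟨hp0, hp1⟩ := hp n
            have hb := (log_one_sub_bounds hp0 hp1).1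
            have h1 : -(p n / (1 - p n)) / p n ≤ Real.log (1 - p n) / p n :=
              (div_le_div_iff_of_pos_right hp0).mpr hb
            have hp0' : p n ≠ 0 := ne_of_gt hp0
            have h1p : (1:ℝ) - p n ≠ 0 := by linarith
            have h2 : -(p n / (1 - p n)) / p n = -(1 / (1 - p n)) := by
              field_simp
            have h3 : (1:ℝ) - 1 / (1 - p n) = -(p n / (1 - p n)) := by
              field_simp; ring
            simp only [hf_def]
            linarith
          · filter_upwards with n; exact hfle n
        -- r n * f n → 0 by squeeze
        have hrf : Tendsto (fun n => ((K n : ℝ) * p n / Real.log n) * f n)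
            atTop (𝓝 0) := by
          refine tendsto_of_tendsto_of_tendsto_of_le_of_le'
            (by simpa using hc.mul hf0) tendsto_const_nhds ?_ ?_
          · filter_upwards [eventually_ge_atTop 2] with n hn
            obtain ⟨hlog, hcn, hub, hlb⟩ := hfacts n hn
            have hr1 : (K n : ℝ) * p n / Real.log n ≤ c n := by
              rw [div_le_iff₀ hlog]; linarith
            exact mul_le_mul_of_nonpos_right hr1 (hfle n)
          · filter_upwards [eventually_ge_atTop 2] with n hn
            obtain ⟨hlog, -, -, -⟩ := hfacts n hn
            obtain ⟨hp0, -⟩ := hp n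
            have hr0 : 0 ≤ (K n : ℝ) * p n / Real.log n := by positivity
            exact mul_nonpos_of_nonneg_of_nonpos hr0 (hfle n)
        refine ⟨1 - cc, ?_, ?_, ?_⟩
        · rw [hg_def]
          have h := ((tendsto_const_nhds : Tendsto (fun _ : ℕ => (1:ℝ)) atTop (𝓝 1)).sub hc).add hrf
          simpa using h
        · rw [htau]; intro h; linarith
        · rw [htau]; intro h; linarith
      · -- 0 < pstar < 1
        have hp1ne : (1:ℝ) - pstar ≠ 0 := by linarith
        set s : ℝ := Real.log (1 - pstar) / pstar with hs_def
        have hsneg : s < 0 := by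
          have hlneg : Real.log (1 - pstar) < 0 :=
            Real.log_neg (by linarith) (by linarith)
          exact div_neg_of_neg_of_pos hlneg hps0
        have hD : 0 < 1 - s := by linarith
        have htau : tau pstar = 2 / (1 - s) := by
          rw [tau, if_neg (ne_of_gt hps0), if_neg (ne_of_lt hps1), hs_def]
        -- log n / n → 0
        have hlogdiv : Tendsto (fun n : ℕ => Real.log n / n) atTop (𝓝 0) := by
          have h := Real.isLittleO_log_id_atTop.tendsto_div_nhds_zero
          exact h.comp tendsto_natCast_atTop_atTop
        -- K n / (n - 1) → 0
        have hKn : Tendsto (fun n : ℕ => (K n : ℝ) / ((n:ℝ) - 1)) atTop (𝓝 0) := by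
          have hU : Tendsto (fun n : ℕ => 2 * ((c n / p n) * (Real.log n / n)))
              atTop (𝓝 0) := by
            have h := ((hc.div hplim (ne_of_gt hps0)).mul hlogdiv).const_mul 2
            simpa using h
          refine tendsto_of_tendsto_of_tendsto_of_le_of_le'
            tendsto_const_nhds hU ?_ ?_
          · filter_upwards [eventually_ge_atTop 2] with n hn
            have hn2 : (2:ℝ) ≤ (n:ℝ) := by exact_mod_cast hn
            exact div_nonneg (by positivity) (by linarith)
          · filter_upwards [eventually_ge_atTop 2] with n hn
            obtain ⟨hlog, hcn, hub, hlb⟩ := hfacts n hn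
            obtain ⟨hp0, hp1⟩ := hp n
            have hn2 : (2:ℝ) ≤ (n:ℝ) := by exact_mod_cast hn
            have hn1 : (0:ℝ) < (n:ℝ) - 1 := by linarith
            have hnn : (0:ℝ) < (n:ℝ) := by linarith
            have hrhs : 2 * ((c n / p n) * (Real.log n / n))
                = (2 * (c n * Real.log n)) / (p n * (n:ℝ)) := by
              field_simp
            rw [hrhs, div_le_div_iff₀ hn1 (mul_pos hp0 hnn)]
            have key : (K n : ℝ) * p n * (n:ℝ) ≤ 2 * (c n * Real.log n) * ((n:ℝ) - 1) := by
              nlinarith [mul_le_mul_of_nonneg_right hub (le_of_lt hnn),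
                mul_nonneg (mul_pos hcn hlog).le (by linarith : (0:ℝ) ≤ (n:ℝ) - 2)]
            linarith [key]
        -- r n → cc / 2
        have hθ : Tendsto (fun n : ℕ => 2 - (K n : ℝ) / ((n:ℝ) - 1)) atTop (𝓝 2) := by
          have h : Tendsto (fun n : ℕ => (2:ℝ) - (K n : ℝ) / ((n:ℝ) - 1))
              atTop (𝓝 ((2:ℝ) - 0)) := tendsto_const_nhds.sub hKn
          simpa using h
        have hr : Tendsto (fun n : ℕ => (K n : ℝ) * p n / Real.log n)
            atTop (𝓝 (cc / 2)) := by
          refine (hc.div hθ (by norm_num)).congr' ?_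
          filter_upwards [eventually_ge_atTop 2] with n hn
          obtain ⟨hlog, hcn, hub, hlb⟩ := hfacts n hn
          obtain ⟨hK1, hK2⟩ := hK n hn
          obtain ⟨hp0, hp1⟩ := hp n
          have hn2 : (2:ℝ) ≤ (n:ℝ) := by exact_mod_cast hn
          have hn1 : (0:ℝ) < (n:ℝ) - 1 := by linarith
          have hk2 : (K n : ℝ) ≤ (n:ℝ) - 1 := by
            have : ((K n : ℝ)) + 1 ≤ (n:ℝ) := by exact_mod_cast hK2
            linarith
          have hθpos : 0 < 2 - (K n : ℝ) / ((n:ℝ) - 1) := by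
            have : (K n : ℝ) / ((n:ℝ) - 1) ≤ 1 := by
              rw [div_le_one hn1]; exact hk2
            linarith
          have hs2 := hscale n hn
          have hexp : 2 * (K n : ℝ) - (K n : ℝ) ^ 2 / ((n:ℝ) - 1)
              = (K n : ℝ) * (2 - (K n : ℝ) / ((n:ℝ) - 1)) := by
            field_simp
          rw [hexp] at hs2
          simp only [Pi.div_apply]
          rw [div_eq_div_iff (ne_of_gt hθpos) (ne_of_gt hlog)]
          linear_combination -hs2
        -- f n → 1 + s
        have hf1 : Tendsto f atTop (𝓝 (1 + s)) := by
          rw [hf_def]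
          have hlg : Tendsto (fun n : ℕ => Real.log (1 - p n)) atTop
              (𝓝 (Real.log (1 - pstar))) := by
            have h := (Real.continuousAt_log hp1ne).tendsto.comp
              (tendsto_const_nhds.sub hplim)
            exact h
          have h2 : Tendsto (fun n : ℕ => Real.log (1 - p n) / p n) atTop
              (𝓝 (Real.log (1 - pstar) / pstar)) := hlg.div hplim (ne_of_gt hps0)
          exact (tendsto_const_nhds : Tendsto (fun _ : ℕ => (1:ℝ)) atTop (𝓝 1)).add h2
        refine ⟨(1 - cc) + cc / 2 * (1 + s), ?_, ?_, ?_⟩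
        · rw [hg_def]
          exact ((tendsto_const_nhds : Tendsto (fun _ : ℕ => (1:ℝ)) atTop (𝓝 1)).sub hc).add (hr.mul hf1)
        · rw [htau]; intro h
          have h2 : 2 < cc * (1 - s) := by
            rw [gt_iff_lt, div_lt_iff₀ hD] at h
            linarith
          nlinarith
        · rw [htau]; intro h
          have h2 : cc * (1 - s) < 2 := by
            rw [lt_div_iff₀ hD] at h
            linarith
          nlinarith
    obtain ⟨L, hgL, hneg, hpos⟩ := hL
    constructor
    · intro h
      exact (mul_log_atBot (hneg h) hgL).congr' heq
    · intro h
      exact (mul_log_atTop (hpos h) hgL).congr' heq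
end

section
/- Fix n ≥ 2, 2 ≤ r ≤ n, 1 ≤ K < n, p ∈ (0,1). For any spanning tree T on vertex set {1,...,r}, the probability that every edge of T is present in H∩G(n;K,p) is at most (p·λ_n(K))^{r−1}, where λ_n(K) = 2K/(n−1) − (K/(n−1))². -/
open scoped Classical

/-- The set of admissible pairing assignments: each node `i` is assigned a
`K`-element subset of the other nodes. -/
noncomputable def validGammas (n K : ℕ) : Finset (Fin n → Finset (Fin n)) :=
  Finset.univ.filter (fun γ => ∀ i, γ i ∈ Finset.powersetCard K (Finset.univ.erase i))

/-- Probability of an event in `H ∩ G(n; K, p)`: the pairing assignment `γ` is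
uniform over `validGammas n K`, and the channel states `β` are i.i.d.
Bernoulli(p) over (unordered) pairs, independent of `γ`. -/
noncomputable def probHG (n K : ℕ) (p : ℝ)
    (E : (Fin n → Finset (Fin n)) → (Sym2 (Fin n) → Bool) → Prop) : ℝ :=
  (∑ γ ∈ validGammas n K, ∑ β : Sym2 (Fin n) → Bool,
      (∏ e : Sym2 (Fin n), if β e then p else 1 - p) * (if E γ β then 1 else 0))
    / ((validGammas n K).card : ℝ)

/-- Adjacency in `H ∩ G(n; K, p)`: K-adjacency and an available channel. -/
def adjHG (n : ℕ) (γ : Fin n → Finset (Fin n)) (β : Sym2 (Fin n) → Bool)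
    (i j : Fin n) : Prop :=
  (j ∈ γ i ∨ i ∈ γ j) ∧ β s(i, j) = true

noncomputable def gamP (n K : ℕ) : Fin n → Finset (Finset (Fin n)) :=
  fun i => Finset.powersetCard K (Finset.univ.erase i)

lemma validGammas_eq (n K : ℕ) : validGammas n K = Fintype.piFinset (gamP n K) := by
  ext γ
  simp [validGammas, gamP, Fintype.mem_piFinset]

lemma countNA {α : Type*} [DecidableEq α] (K : ℕ) (X : Finset α) (v : α)
    (B : Finset α → Prop) [DecidablePred B]
    (hB : ∀ s, B s → ∀ x ∈ X, B (insert x (s.erase v))) :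
    X.card * ((Finset.powersetCard K X).filter (fun s => B s ∧ v ∈ s)).card
      ≤ K * ((Finset.powersetCard K X).filter B).card := by
  classical
  by_cases hKX : K ≤ X.card
  · set A := (Finset.powersetCard K X).filter B with hA
    set A₁ := (Finset.powersetCard K X).filter (fun s => B s ∧ v ∈ s) with hA₁
    set A₀ := (Finset.powersetCard K X).filter (fun s => B s ∧ v ∉ s) with hA₀
    have hcards : A₁.card + A₀.card = A.card := by
      have h1 : A₁ = A.filter (fun s => v ∈ s) := by
        rw [hA, Finset.filter_filter]
      have h0 : A₀ = A.filter (fun s => v ∉ s) := by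
        rw [hA, Finset.filter_filter]
      rw [h1, h0, Finset.card_filter_add_card_filter_not]
    have key : A₁.card * (X.card - K) ≤ A₀.card * K := by
      apply Finset.card_mul_le_card_mul (fun s t => s.erase v ⊆ t)
      · intro s hs
        rw [hA₁, Finset.mem_filter, Finset.mem_powersetCard] at hs
        obtain ⟨⟨hsX, hsK⟩, hBs, hvs⟩ := hs
        have hK1 : 1 ≤ K := by
          rw [← hsK]; exact Finset.card_pos.mpr ⟨v, hvs⟩
        have hXs : (X \ s).card = X.card - K := by
          rw [Finset.card_sdiff_of_subset hsX, hsK]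
        rw [← hXs]
        apply Finset.card_le_card_of_injOn (fun x => insert x (s.erase v))
        · intro x hx
          rw [Finset.mem_coe, Finset.mem_sdiff] at hx
          obtain ⟨hxX, hxs⟩ := hx
          have hxe : x ∉ s.erase v := fun h => hxs (Finset.mem_of_mem_erase h)
          have hvx : x ≠ v := fun h => hxs (h ▸ hvs)
          rw [Finset.mem_coe, Finset.mem_bipartiteAbove]
          constructor
          · rw [hA₀, Finset.mem_filter, Finset.mem_powersetCard]
            refine ⟨⟨?_, ?_⟩, hB s hBs x hxX, ?_⟩
            · intro y hy
              rcases Finset.mem_insert.mp hy with rfl | hy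
              · exact hxX
              · exact hsX (Finset.mem_of_mem_erase hy)
            · rw [Finset.card_insert_of_notMem hxe, Finset.card_erase_of_mem hvs, hsK]
              omega
            · intro hvmem
              rcases Finset.mem_insert.mp hvmem with h | h
              · exact hvx h.symm
              · exact (Finset.notMem_erase v s) h
          · exact Finset.subset_insert _ _
        · intro x hx y hy hxy
          simp only [Finset.mem_coe, Finset.mem_sdiff] at hx hy
          have hxe : x ∉ s.erase v := fun h => hx.2 (Finset.mem_of_mem_erase h)
          have hye : y ∉ s.erase v := fun h => hy.2 (Finset.mem_of_mem_erase h)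
          have hxy' : insert x (s.erase v) = insert y (s.erase v) := hxy
          have : x ∈ insert y (s.erase v) := by
            rw [← hxy']; exact Finset.mem_insert_self x _
          rcases Finset.mem_insert.mp this with h | h
          · exact h
          · exact absurd h hxe
      · intro t ht
        rw [hA₀, Finset.mem_filter, Finset.mem_powersetCard] at ht
        obtain ⟨⟨htX, htK⟩, hBt, hvt⟩ := ht
        calc (Finset.bipartiteBelow (fun s t => s.erase v ⊆ t) A₁ t).card
            ≤ (t.image (fun x => insert v (t.erase x))).card := by
              apply Finset.card_le_card
              intro s hs
              rw [Finset.mem_bipartiteBelow] at hs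
              obtain ⟨hs, hst⟩ := hs
              rw [hA₁, Finset.mem_filter, Finset.mem_powersetCard] at hs
              obtain ⟨⟨hsX, hsK⟩, hBs, hvs⟩ := hs
              have hK1 : 1 ≤ K := by
                rw [← hsK]; exact Finset.card_pos.mpr ⟨v, hvs⟩
              have hce : (s.erase v).card = K - 1 := by
                rw [Finset.card_erase_of_mem hvs, hsK]
              have hlt : (s.erase v).card < t.card := by omega
              have hne : ¬ (t ⊆ s.erase v) := fun h => absurd (Finset.card_le_card h) (by omega)
              obtain ⟨x, hxt, hxs⟩ := Finset.not_subset.mp hne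
              have hsub : s.erase v ⊆ t.erase x := by
                intro y hy
                exact Finset.mem_erase.mpr ⟨fun h => hxs (h ▸ hy), hst hy⟩
              have heq : s.erase v = t.erase x := by
                apply Finset.eq_of_subset_of_card_le hsub
                rw [Finset.card_erase_of_mem hxt, hce, htK]
              rw [Finset.mem_image]
              exact ⟨x, hxt, by rw [← heq, Finset.insert_erase hvs]⟩
          _ ≤ t.card := Finset.card_image_le
          _ = K := htK
    calc X.card * A₁.card = A₁.card * (X.card - K) + A₁.card * K := by
          rw [← Nat.mul_add, Nat.sub_add_cancel hKX, Nat.mul_comm]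
      _ ≤ A₀.card * K + A₁.card * K := by omega
      _ = K * A.card := by rw [← Nat.add_mul, Nat.add_comm, hcards, Nat.mul_comm]
  · have : Finset.powersetCard K X = ∅ := by
      rw [Finset.powersetCard_eq_empty]; omega
    simp [this]

lemma sum_update_core {n : ℕ} (P : Fin n → Finset (Finset (Fin n))) (v : Fin n)
    (F : (Fin n → Finset (Fin n)) → Finset (Fin n) → ℝ) :
    ∑ γ ∈ Fintype.piFinset P, ∑ s ∈ P v, F (Function.update γ v s) (γ v)
      = ∑ γ ∈ Fintype.piFinset P, ∑ s ∈ P v, F γ s := by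
  classical
  rw [← Finset.sum_product', ← Finset.sum_product']
  apply Finset.sum_bij' (i := fun x _ => (Function.update x.1 v x.2, x.1 v))
    (j := fun x _ => (Function.update x.1 v x.2, x.1 v))
  case hi =>
    intro a ha
    rw [Finset.mem_product] at ha ⊢
    refine ⟨Fintype.mem_piFinset.mpr fun i => ?_, ?_⟩
    · rcases eq_or_ne i v with rfl | h
      · simpa using ha.2
      · simp only [Function.update_of_ne h]
        exact Fintype.mem_piFinset.mp ha.1 i
    · simpa using Fintype.mem_piFinset.mp ha.1 v
  case hj =>
    intro a ha
    rw [Finset.mem_product] at ha ⊢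
    refine ⟨Fintype.mem_piFinset.mpr fun i => ?_, ?_⟩
    · rcases eq_or_ne i v with rfl | h
      · simpa using ha.2
      · simp only [Function.update_of_ne h]
        exact Fintype.mem_piFinset.mp ha.1 i
    · simpa using Fintype.mem_piFinset.mp ha.1 v
  case left_neg =>
    intro a ha
    simp only [Function.update_self, Function.update_idem, Function.update_eq_self]
  case right_neg =>
    intro a ha
    simp only [Function.update_self, Function.update_idem, Function.update_eq_self]
  case h =>
    intro a ha
    simp only [Function.update_self]

lemma lemB {n : ℕ} (P : Fin n → Finset (Finset (Fin n))) (v : Fin n)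
    (f : (Fin n → Finset (Fin n)) → ℝ) (g : Finset (Fin n) → ℝ)
    (hf : ∀ γ s, f (Function.update γ v s) = f γ) :
    (∑ γ ∈ Fintype.piFinset P, f γ * g (γ v)) * ((P v).card : ℝ)
      = (∑ γ ∈ Fintype.piFinset P, f γ) * (∑ s ∈ P v, g s) := by
  have h := sum_update_core P v (fun γ s => f γ * g s)
  simp only [hf] at h
  have h1 : ∑ γ ∈ Fintype.piFinset P, ∑ s ∈ P v, f γ * g (γ v)
      = (∑ γ ∈ Fintype.piFinset P, f γ * g (γ v)) * ((P v).card : ℝ) := by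
    rw [Finset.sum_mul]
    refine Finset.sum_congr rfl fun γ _ => ?_
    rw [Finset.sum_const, nsmul_eq_mul, mul_comm]
  have h2 : ∑ γ ∈ Fintype.piFinset P, ∑ s ∈ P v, f γ * g s
      = (∑ γ ∈ Fintype.piFinset P, f γ) * (∑ s ∈ P v, g s) := by
    rw [Finset.sum_mul]
    exact Finset.sum_congr rfl fun γ _ => (Finset.mul_sum _ _ _).symm
  rw [← h1, h, h2]

lemma ite_one_mul_ite_one (A B : Prop) [Decidable A] [Decidable B] :
    (if A then (1:ℝ) else 0) * (if B then (1:ℝ) else 0) = if A ∧ B then (1:ℝ) else 0 := by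
  by_cases hA : A <;> by_cases hB : B <;> simp [hA, hB]

def FreshList {α : Type*} (L : List (α × α)) : Prop :=
  (∀ p ∈ L, p.2 ≠ p.1) ∧ L.Pairwise (fun a b => b.2 ≠ a.1 ∧ b.2 ≠ a.2)

lemma exists_fresh_list {r : ℕ} (hr2 : 2 ≤ r) (T : SimpleGraph (Fin r)) (hT : T.IsTree) :
    ∃ L : List (Fin r × Fin r), L.length = r - 1 ∧ FreshList L ∧ ∀ p ∈ L, T.Adj p.1 p.2 := by
  classical
  have hconn := hT.isConnected
  set root : Fin r := ⟨0, by omega⟩ with hroot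
  -- parent existence
  have hpar : ∀ v : Fin r, v ≠ root → ∃ u, T.Adj u v ∧ T.dist root u + 1 = T.dist root v := by
    intro v hv
    have hd : 0 < T.dist root v := hconn.pos_dist_of_ne (Ne.symm hv)
    obtain ⟨p, hp⟩ := hconn.exists_walk_length_eq_dist root v
    have hrev : p.reverse.length = T.dist root v := by rw [SimpleGraph.Walk.length_reverse, hp]
    cases hq : p.reverse with
    | nil =>
        rw [hq] at hrev
        simp at hrev
        omega
    | @cons _ w _ h q =>
        refine ⟨w, h.symm, ?_⟩
        rw [hq] at hrev
        simp only [SimpleGraph.Walk.length_cons] at hrev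
        have h1 : T.dist root w ≤ q.length := by
          have := SimpleGraph.dist_le q.reverse
          rwa [SimpleGraph.Walk.length_reverse] at this
        have h2 : T.dist root v ≤ T.dist root w + 1 := by
          have ht := hconn.dist_triangle (v := w) (u := root) (w := v)
          have hwv : T.dist w v ≤ 1 := by
            have := SimpleGraph.dist_le (SimpleGraph.Walk.cons h.symm SimpleGraph.Walk.nil)
            simpa using this
          omega
        omega
  set pa : Fin r → Fin r := fun v => if h : v = root then root else Classical.choose (hpar v h)
    with hpa
  have hpa_spec : ∀ v : Fin r, v ≠ root →
      T.Adj (pa v) v ∧ T.dist root (pa v) + 1 = T.dist root v := by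
    intro v hv
    rw [hpa]
    simp only [dif_neg hv]
    exact Classical.choose_spec (hpar v hv)
  -- sorted list of non-root vertices
  set le : Fin r → Fin r → Bool := fun a b => decide (T.dist root a ≤ T.dist root b) with hle
  set l : List (Fin r) := ((Finset.univ.erase root).toList).mergeSort le with hl
  have hperm : l.Perm (Finset.univ.erase root).toList := List.mergeSort_perm _ _
  have hnodup : l.Nodup := (hperm.nodup_iff).mpr (Finset.nodup_toList _)
  have hmem : ∀ x, x ∈ l ↔ x ∈ Finset.univ.erase root := by
    intro x
    rw [hperm.mem_iff, Finset.mem_toList]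
  have hsorted : l.Pairwise (fun a b => le a b = true) := by
    apply List.pairwise_mergeSort
    · intro a b c hab hbc
      rw [hle] at hab hbc ⊢
      simp only [decide_eq_true_eq] at *
      omega
    · intro a b
      rw [hle]
      simp only [Bool.or_eq_true, decide_eq_true_eq]
      omega
  have hlen : l.length = r - 1 := by
    rw [hperm.length_eq, Finset.length_toList,
      Finset.card_erase_of_mem (Finset.mem_univ root), Finset.card_univ, Fintype.card_fin]
  refine ⟨l.map (fun x => (pa x, x)), by simp [hlen], ⟨?_, ?_⟩, ?_⟩
  · -- p.2 ≠ p.1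
    intro p hp
    rw [List.mem_map] at hp
    obtain ⟨x, hx, rfl⟩ := hp
    have hxr : x ≠ root := (Finset.mem_erase.mp ((hmem x).mp hx)).1
    have := (hpa_spec x hxr).2
    intro hcontra
    have h2 := congrArg (T.dist root) hcontra
    simp only [] at h2
    omega
  · -- pairwise freshness
    rw [List.pairwise_map]
    have hcomb := hsorted.and hnodup
    apply hcomb.imp_of_mem
    intro a b ha hb hab
    have har : a ≠ root := (Finset.mem_erase.mp ((hmem a).mp ha)).1
    have hda := (hpa_spec a har).2
    have hdab : T.dist root a ≤ T.dist root b := by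
      have := hab.1
      rw [hle] at this
      simpa using this
    constructor
    · intro hcontra
      have h2 := congrArg (T.dist root) hcontra
      simp only [] at h2
      omega
    · exact fun h => hab.2 h.symm
  · intro p hp
    rw [List.mem_map] at hp
    obtain ⟨x, hx, rfl⟩ := hp
    have hxr : x ≠ root := (Finset.mem_erase.mp ((hmem x).mp hx)).1
    exact (hpa_spec x hxr).1

lemma lemA {n K : ℕ} (hn : 2 ≤ n) (hK1 : 1 ≤ K) (hKn : K < n)
    (L : List (Fin n × Fin n)) :
    FreshList L →
    ∑ γ ∈ Fintype.piFinset (gamP n K),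
        (if ∀ p ∈ L, (p.2 ∈ γ p.1 ∨ p.1 ∈ γ p.2) then (1:ℝ) else 0)
      ≤ (2*(K:ℝ)/((n:ℝ)-1) - ((K:ℝ)/((n:ℝ)-1))^2) ^ L.length
          * ((Fintype.piFinset (gamP n K)).card : ℝ) := by
  have hn1R : (0:ℝ) < (n:ℝ) - 1 := by
    have : (2:ℝ) ≤ (n:ℝ) := by exact_mod_cast hn
    linarith
  set q : ℝ := (K:ℝ)/((n:ℝ)-1) with hq
  have hq0 : 0 ≤ q := by positivity
  have hq1 : q ≤ 1 := by
    rw [hq, div_le_one hn1R]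
    have : (K:ℝ) ≤ (n:ℝ) - 1 := by
      have : K ≤ n - 1 := by omega
      have h2 : ((K:ℕ):ℝ) ≤ ((n-1 : ℕ):ℝ) := by exact_mod_cast this
      rwa [Nat.cast_sub (by omega), Nat.cast_one] at h2
    linarith
  have hlam0 : 0 ≤ 2*(K:ℝ)/((n:ℝ)-1) - ((K:ℝ)/((n:ℝ)-1))^2 := by
    have : 2*(K:ℝ)/((n:ℝ)-1) - ((K:ℝ)/((n:ℝ)-1))^2 = q * (2 - q) := by
      rw [hq]; ring
    rw [this]
    nlinarith
  have hcard_gamP : ∀ i : Fin n, ((gamP n K i).card : ℕ) = (n-1).choose K := by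
    intro i
    rw [gamP, Finset.card_powersetCard, Finset.card_erase_of_mem (Finset.mem_univ i),
      Finset.card_univ, Fintype.card_fin]
  have hc_pos : ∀ i : Fin n, 0 < (gamP n K i).card := by
    intro i
    rw [hcard_gamP i]
    exact Nat.choose_pos (by omega)
  induction L using List.reverseRecOn with
  | nil => intro _; simp
  | append_singleton L e ih =>
    rcases e with ⟨u, v⟩
    intro hF
    -- extract freshness facts
    have hvu : v ≠ u := hF.1 (u, v) (by simp)
    have hFL : FreshList L :=
      ⟨fun p hp => hF.1 p (by simp [hp]), (List.pairwise_append.mp hF.2).1⟩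
    have hvL : ∀ p ∈ L, v ≠ p.1 ∧ v ≠ p.2 := by
      intro p hp
      exact (List.pairwise_append.mp hF.2).2.2 p hp (u, v) (by simp)
    have IH := ih hFL
    set f : (Fin n → Finset (Fin n)) → ℝ :=
      fun γ => if ∀ p ∈ L, (p.2 ∈ γ p.1 ∨ p.1 ∈ γ p.2) then (1:ℝ) else 0 with hfdef
    -- f is indep of coordinate v
    have hfv : ∀ γ s, f (Function.update γ v s) = f γ := by
      intro γ s
      rw [hfdef]
      refine if_congr ?_ rfl rfl
      refine forall₂_congr fun p hp => ?_
      rw [Function.update_of_ne (Ne.symm (hvL p hp).1), Function.update_of_ne (Ne.symm (hvL p hp).2)]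
    -- pointwise indicator split
    have hsplit : ∀ γ : Fin n → Finset (Fin n),
        (if ∀ p ∈ L ++ [(u,v)], (p.2 ∈ γ p.1 ∨ p.1 ∈ γ p.2) then (1:ℝ) else 0)
          = f γ * (if v ∈ γ u then (1:ℝ) else 0)
            + (f γ * (if v ∈ γ u then (0:ℝ) else 1)) * (if u ∈ γ v then (1:ℝ) else 0) := by
      intro γ
      rw [hfdef]
      simp only [List.forall_mem_append, List.forall_mem_singleton]
      by_cases hA : ∀ p ∈ L, (p.2 ∈ γ p.1 ∨ p.1 ∈ γ p.2) <;>
        by_cases h1 : v ∈ γ u <;> by_cases h2 : u ∈ γ v <;>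
          simp [hA, h1, h2]
    rw [Finset.sum_congr rfl fun γ _ => hsplit γ, Finset.sum_add_distrib]
    set S0 : ℝ := ∑ γ ∈ Fintype.piFinset (gamP n K), f γ with hS0
    set S1 : ℝ := ∑ γ ∈ Fintype.piFinset (gamP n K), f γ * (if v ∈ γ u then (1:ℝ) else 0) with hS1
    set S2 : ℝ := ∑ γ ∈ Fintype.piFinset (gamP n K),
        (f γ * (if v ∈ γ u then (0:ℝ) else 1)) * (if u ∈ γ v then (1:ℝ) else 0) with hS2
    -- nonnegativity and S1 ≤ S0
    have hf01 : ∀ γ, 0 ≤ f γ ∧ f γ ≤ 1 := by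
      intro γ; rw [hfdef]; dsimp only; split_ifs <;> norm_num
    have hS0nn : 0 ≤ S0 := Finset.sum_nonneg fun γ _ => (hf01 γ).1
    have hS1nn : 0 ≤ S1 := Finset.sum_nonneg fun γ _ => by
      by_cases h : v ∈ γ u <;> simp [h, (hf01 γ).1]
    have hS1S0 : S1 ≤ S0 := Finset.sum_le_sum fun γ _ => by
      by_cases h : v ∈ γ u <;> simp [h, (hf01 γ).1]
    -- Claim 1 : S1 ≤ q * S0  (negative association via counting)
    have claim1 : S1 ≤ q * S0 := by
      classical
      set cu : ℝ := ((gamP n K u).card : ℝ) with hcu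
      have hcu_pos : (0:ℝ) < cu := by
        rw [hcu]; exact_mod_cast hc_pos u
      -- rewrite cu * S1 and cu * S0 via the update trick
      have core1 := sum_update_core (gamP n K) u
        (fun γ s => f γ * (if v ∈ γ u then (1:ℝ) else 0))
      have core0 := sum_update_core (gamP n K) u (fun γ s => f γ)
      have hrhs1 : ∑ γ ∈ Fintype.piFinset (gamP n K), ∑ s ∈ gamP n K u,
          (f γ * (if v ∈ γ u then (1:ℝ) else 0)) = cu * S1 := by
        rw [hS1, Finset.mul_sum]
        refine Finset.sum_congr rfl fun γ _ => ?_
        rw [Finset.sum_const, nsmul_eq_mul]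
      have hrhs0 : ∑ γ ∈ Fintype.piFinset (gamP n K), ∑ s ∈ gamP n K u, f γ = cu * S0 := by
        rw [hS0, Finset.mul_sum]
        refine Finset.sum_congr rfl fun γ _ => ?_
        rw [Finset.sum_const, nsmul_eq_mul]
      have hlhs1 : ∑ γ ∈ Fintype.piFinset (gamP n K), ∑ s ∈ gamP n K u,
          (f (Function.update γ u s) * (if v ∈ (Function.update γ u s) u then (1:ℝ) else 0))
          = cu * S1 := by rw [core1, hrhs1]
      have hlhs0 : ∑ γ ∈ Fintype.piFinset (gamP n K), ∑ s ∈ gamP n K u,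
          f (Function.update γ u s) = cu * S0 := by rw [core0, hrhs0]
      simp only [Function.update_self] at hlhs1
      -- pointwise counting bound
      have key : ∀ γ : Fin n → Finset (Fin n),
          ((n:ℝ)-1) * (∑ s ∈ gamP n K u, f (Function.update γ u s) * (if v ∈ s then (1:ℝ) else 0))
            ≤ (K:ℝ) * (∑ s ∈ gamP n K u, f (Function.update γ u s)) := by
        intro γ
        set B : Finset (Fin n) → Prop := fun s => ∀ p ∈ L,
          (p.2 ∈ (Function.update γ u s) p.1 ∨ p.1 ∈ (Function.update γ u s) p.2) with hB
        have hBmono : ∀ s, B s → ∀ x ∈ Finset.univ.erase u, B (insert x (s.erase v)) := by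
          intro s hs x _ p hp
          have h1 : p.1 ≠ v := Ne.symm (hvL p hp).1
          have h2 : p.2 ≠ v := Ne.symm (hvL p hp).2
          have hmem : ∀ y : Fin n, y ≠ v → y ∈ s → y ∈ insert x (s.erase v) :=
            fun y hy hys => Finset.mem_insert_of_mem (Finset.mem_erase.mpr ⟨hy, hys⟩)
          rcases hs p hp with h | h
          · left
            rcases eq_or_ne p.1 u with he | he
            · rw [he, Function.update_self] at h ⊢
              exact hmem p.2 h2 h
            · rw [Function.update_of_ne he] at h ⊢
              exact h
          · right
            rcases eq_or_ne p.2 u with he | he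
            · rw [he, Function.update_self] at h ⊢
              exact hmem p.1 h1 h
            · rw [Function.update_of_ne he] at h ⊢
              exact h
        have hcount := countNA K (Finset.univ.erase u) v B hBmono
        have hXcard : (Finset.univ.erase u).card = n - 1 := by
          rw [Finset.card_erase_of_mem (Finset.mem_univ u), Finset.card_univ, Fintype.card_fin]
        rw [hXcard] at hcount
        have e1 : ∑ s ∈ gamP n K u, f (Function.update γ u s) * (if v ∈ s then (1:ℝ) else 0)
            = (((Finset.powersetCard K (Finset.univ.erase u)).filter
                (fun s => B s ∧ v ∈ s)).card : ℝ) := by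
          rw [← Finset.sum_boole]
          refine Finset.sum_congr rfl fun s _ => ?_
          simp only [hfdef, hB]
          exact ite_one_mul_ite_one _ _
        have e0 : ∑ s ∈ gamP n K u, f (Function.update γ u s)
            = (((Finset.powersetCard K (Finset.univ.erase u)).filter B).card : ℝ) := by
          rw [← Finset.sum_boole]
          refine Finset.sum_congr rfl fun s _ => ?_
          simp only [hfdef, hB]
        rw [e1, e0]
        have hcast : ((n:ℝ) - 1) = (((n-1:ℕ)):ℝ) := by
          rw [Nat.cast_sub (by omega), Nat.cast_one]
        rw [hcast]
        exact_mod_cast hcount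
      -- combine
      have hsum : ((n:ℝ)-1) * (cu * S1) ≤ (K:ℝ) * (cu * S0) := by
        rw [← hlhs1, ← hlhs0, Finset.mul_sum, Finset.mul_sum]
        exact Finset.sum_le_sum fun γ _ => key γ
      have h2 : ((n:ℝ)-1) * S1 ≤ (K:ℝ) * S0 := by
        have := mul_le_mul_of_nonneg_right hsum (le_of_lt (inv_pos.mpr hcu_pos))
        calc ((n:ℝ)-1) * S1 = ((n:ℝ)-1) * (cu * S1) * cu⁻¹ := by
              field_simp
          _ ≤ (K:ℝ) * (cu * S0) * cu⁻¹ := this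
          _ = (K:ℝ) * S0 := by field_simp
      rw [hq, div_mul_eq_mul_div, le_div_iff₀ hn1R, mul_comm]
      exact h2
    -- Claim 2 : S2 ≤ q * (S0 - S1)
    have claim2 : S2 ≤ q * (S0 - S1) := by
      classical
      set cv : ℝ := ((gamP n K v).card : ℝ) with hcv
      have hcv_pos : (0:ℝ) < cv := by
        rw [hcv]; exact_mod_cast hc_pos v
      set f' : (Fin n → Finset (Fin n)) → ℝ :=
        fun γ => f γ * (if v ∈ γ u then (0:ℝ) else 1) with hf'
      have hf'v : ∀ γ s, f' (Function.update γ v s) = f' γ := by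
        intro γ s
        simp only [hf']
        rw [hfv, Function.update_of_ne (Ne.symm hvu)]
      have hB := lemB (gamP n K) v f' (fun s => if u ∈ s then (1:ℝ) else 0) hf'v
      have hS2' : S2 = ∑ γ ∈ Fintype.piFinset (gamP n K),
          f' γ * (if u ∈ γ v then (1:ℝ) else 0) := by rw [hS2]
      have hsum_f' : ∑ γ ∈ Fintype.piFinset (gamP n K), f' γ = S0 - S1 := by
        rw [hS0, hS1, ← Finset.sum_sub_distrib]
        refine Finset.sum_congr rfl fun γ _ => ?_
        simp only [hf']
        by_cases h : v ∈ γ u <;> simp [h]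
      -- count: ∑_{s} 1{u ∈ s} ≤ q * cv
      have hcnt : (∑ s ∈ gamP n K v, if u ∈ s then (1:ℝ) else 0) ≤ q * cv := by
        rw [Finset.sum_boole]
        have hcount := countNA K (Finset.univ.erase v) u (fun _ => True)
          (fun s _ x _ => trivial)
        have hXcard : (Finset.univ.erase v).card = n - 1 := by
          rw [Finset.card_erase_of_mem (Finset.mem_univ v), Finset.card_univ, Fintype.card_fin]
        rw [hXcard] at hcount
        have hfilter1 : (Finset.powersetCard K (Finset.univ.erase v)).filter
            (fun s => True ∧ u ∈ s) = (gamP n K v).filter (fun s => u ∈ s) := by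
          rw [gamP]; simp
        have hfilter0 : (Finset.powersetCard K (Finset.univ.erase v)).filter
            (fun _ => True) = gamP n K v := by
          rw [gamP]; simp
        rw [hfilter1, hfilter0] at hcount
        have hcastineq : ((n:ℝ) - 1) * (((gamP n K v).filter (fun s => u ∈ s)).card : ℝ)
            ≤ (K:ℝ) * cv := by
          have hcast : ((n:ℝ) - 1) = (((n-1:ℕ)):ℝ) := by
            rw [Nat.cast_sub (by omega), Nat.cast_one]
          rw [hcast, hcv]
          exact_mod_cast hcount
        rw [hq, div_mul_eq_mul_div, le_div_iff₀ hn1R, mul_comm]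
        exact hcastineq
      have hcnt_nn : (0:ℝ) ≤ ∑ s ∈ gamP n K v, if u ∈ s then (1:ℝ) else 0 :=
        Finset.sum_nonneg fun s _ => by by_cases h : u ∈ s <;> simp [h]
      have hS0S1 : (0:ℝ) ≤ S0 - S1 := by linarith
      have : S2 * cv ≤ (q * (S0 - S1)) * cv := by
        rw [hS2', hB, hsum_f']
        calc (S0 - S1) * (∑ s ∈ gamP n K v, if u ∈ s then (1:ℝ) else 0)
            ≤ (S0 - S1) * (q * cv) := mul_le_mul_of_nonneg_left hcnt hS0S1
          _ = (q * (S0 - S1)) * cv := by ring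
      exact le_of_mul_le_mul_right this hcv_pos
    -- IH bound
    have hIH : S0 ≤ (2*(K:ℝ)/((n:ℝ)-1) - ((K:ℝ)/((n:ℝ)-1))^2) ^ L.length
        * ((Fintype.piFinset (gamP n K)).card : ℝ) := IH
    have hlen : (L ++ [(u,v)]).length = L.length + 1 := by simp
    rw [hlen]
    have hlam_eq : 2*(K:ℝ)/((n:ℝ)-1) - ((K:ℝ)/((n:ℝ)-1))^2 = q * (2 - q) := by
      rw [hq]; ring
    calc S1 + S2 ≤ S1 + q * (S0 - S1) := by linarith
      _ = q * S0 + (1 - q) * S1 := by ring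
      _ ≤ q * S0 + (1 - q) * (q * S0) := by nlinarith
      _ = (q * (2 - q)) * S0 := by ring
      _ ≤ (q * (2 - q)) * ((2*(K:ℝ)/((n:ℝ)-1) - ((K:ℝ)/((n:ℝ)-1))^2) ^ L.length
          * ((Fintype.piFinset (gamP n K)).card : ℝ)) := by
          apply mul_le_mul_of_nonneg_left hIH
          rw [← hlam_eq]; exact hlam0
      _ = (2*(K:ℝ)/((n:ℝ)-1) - ((K:ℝ)/((n:ℝ)-1))^2) ^ (L.length + 1)
          * ((Fintype.piFinset (gamP n K)).card : ℝ) := by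
          rw [hlam_eq, pow_succ]; ring

lemma beta_sum {n : ℕ} (p : ℝ) (S : Finset (Sym2 (Fin n))) :
    ∑ β : Sym2 (Fin n) → Bool,
      (∏ e : Sym2 (Fin n), if β e then p else 1 - p)
        * (if ∀ e ∈ S, β e = true then (1:ℝ) else 0)
      = p ^ S.card := by
  classical
  have h1 : ∀ β : Sym2 (Fin n) → Bool,
      (∏ e : Sym2 (Fin n), if β e then p else 1 - p)
          * (if ∀ e ∈ S, β e = true then (1:ℝ) else 0)
        = ∏ e : Sym2 (Fin n), ((if β e then p else 1 - p)
            * (if e ∈ S then (if β e = true then (1:ℝ) else 0) else 1)) := by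
    intro β
    have h2 : (if ∀ e ∈ S, β e = true then (1:ℝ) else 0)
        = ∏ e : Sym2 (Fin n), (if e ∈ S then (if β e = true then (1:ℝ) else 0) else 1) := by
      rw [Finset.prod_ite, Finset.prod_const_one, mul_one, Finset.filter_univ_mem,
        Finset.prod_boole]
      congr 1
    rw [Finset.prod_mul_distrib, ← h2]
  simp only [h1]
  have h2 : ∑ β ∈ (Finset.univ : Finset (Sym2 (Fin n) → Bool)),
      ∏ e : Sym2 (Fin n), ((if β e then p else 1 - p)
        * (if e ∈ S then (if β e = true then (1:ℝ) else 0) else 1))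
      = ∏ e : Sym2 (Fin n), ∑ b ∈ (Finset.univ : Finset Bool),
          ((if b then p else 1 - p) * (if e ∈ S then (if b = true then (1:ℝ) else 0) else 1)) := by
    rw [Finset.prod_univ_sum, ← Fintype.piFinset_univ]
  rw [h2]
  have h3 : ∀ e : Sym2 (Fin n), (∑ b ∈ (Finset.univ : Finset Bool),
      ((if b then p else 1 - p) * (if e ∈ S then (if b = true then (1:ℝ) else 0) else 1)))
      = if e ∈ S then p else 1 := by
    intro e
    rw [Fintype.sum_bool]
    by_cases he : e ∈ S <;> simp [he]
  rw [Finset.prod_congr rfl fun e _ => h3 e, Finset.prod_ite, Finset.prod_const,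
    Finset.prod_const_one, mul_one, Finset.filter_univ_mem]

theorem tree_containment_prob_bound (n r K : ℕ) (p : ℝ) (hn : 2 ≤ n)
    (hr2 : 2 ≤ r) (hrn : r ≤ n) (hK1 : 1 ≤ K) (hKn : K < n)
    (hp : p ∈ Set.Ioo (0:ℝ) 1)
    (T : SimpleGraph (Fin r)) (hT : T.IsTree) :
    probHG n K p (fun γ β => ∀ i j : Fin r, T.Adj i j →
        adjHG n γ β (Fin.castLE hrn i) (Fin.castLE hrn j))
      ≤ (p * (2 * (K : ℝ) / ((n : ℝ) - 1) - ((K : ℝ) / ((n : ℝ) - 1)) ^ 2)) ^ (r - 1) := by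
  classical
  obtain ⟨hp0, hp1⟩ := hp
  set lam : ℝ := 2 * (K : ℝ) / ((n : ℝ) - 1) - ((K : ℝ) / ((n : ℝ) - 1)) ^ 2 with hlam
  have hn1R : (0:ℝ) < (n:ℝ) - 1 := by
    have : (2:ℝ) ≤ (n:ℝ) := by exact_mod_cast hn
    linarith
  have hKn1R : (K:ℝ) ≤ (n:ℝ) - 1 := by
    have h1 : K ≤ n - 1 := by omega
    have h2 : ((K:ℕ):ℝ) ≤ ((n-1 : ℕ):ℝ) := by exact_mod_cast h1
    rwa [Nat.cast_sub (by omega), Nat.cast_one] at h2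
  have hlam0 : 0 ≤ lam := by
    rw [hlam]
    have hq0 : (0:ℝ) ≤ (K:ℝ)/((n:ℝ)-1) := by positivity
    have hq1 : (K:ℝ)/((n:ℝ)-1) ≤ 1 := by
      rw [div_le_one hn1R]; linarith
    have : 2 * (K : ℝ) / ((n : ℝ) - 1) - ((K : ℝ) / ((n : ℝ) - 1)) ^ 2
        = ((K:ℝ)/((n:ℝ)-1)) * (2 - (K:ℝ)/((n:ℝ)-1)) := by ring
    rw [this]
    nlinarith
  set c : Fin r → Fin n := Fin.castLE hrn with hc
  have hcinj : Function.Injective c := Fin.castLE_injective hrn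
  obtain ⟨L0, hL0len, hL0fresh, hL0adj⟩ := exists_fresh_list hr2 T hT
  set L : List (Fin n × Fin n) := L0.map (fun q => (c q.1, c q.2)) with hL
  have hLlen : L.length = r - 1 := by simp [hL, hL0len]
  have hLfresh : FreshList L := by
    constructor
    · intro q hq
      rw [hL, List.mem_map] at hq
      obtain ⟨a, ha, rfl⟩ := hq
      exact fun h => (hL0fresh.1 a ha) (hcinj h)
    · rw [hL, List.pairwise_map]
      apply hL0fresh.2.imp
      intro a b hab
      exact ⟨fun h => hab.1 (hcinj h), fun h => hab.2 (hcinj h)⟩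
  set S : Finset (Sym2 (Fin n)) := T.edgeFinset.image (Sym2.map c) with hS
  have hScard : S.card = r - 1 := by
    rw [hS, Finset.card_image_of_injective _ (Sym2.map.injective hcinj)]
    have h1 := hT.card_edgeFinset
    rw [Fintype.card_fin] at h1
    omega
  -- event splitting
  have hsplit : ∀ (γ : Fin n → Finset (Fin n)) (β : Sym2 (Fin n) → Bool),
      (if (∀ i j : Fin r, T.Adj i j → adjHG n γ β (c i) (c j)) then (1:ℝ) else 0)
        = (if (∀ i j : Fin r, T.Adj i j → ((c j) ∈ γ (c i) ∨ (c i) ∈ γ (c j)))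
            then (1:ℝ) else 0)
          * (if (∀ e ∈ S, β e = true) then (1:ℝ) else 0) := by
    intro γ β
    rw [ite_one_mul_ite_one]
    refine if_congr ?_ rfl rfl
    simp only [adjHG]
    constructor
    · intro h
      refine ⟨fun i j hij => (h i j hij).1, ?_⟩
      intro e he
      rw [hS, Finset.mem_image] at he
      obtain ⟨e', he', rfl⟩ := he
      induction e' using Sym2.ind with
      | _ i j =>
        have hij : T.Adj i j := by
          rwa [SimpleGraph.mem_edgeFinset, SimpleGraph.mem_edgeSet] at he'
        have h2 := (h i j hij).2
        rwa [Sym2.map_pair_eq]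
    · rintro ⟨h1, h2⟩ i j hij
      refine ⟨h1 i j hij, ?_⟩
      have hmem : Sym2.map c s(i,j) ∈ S := by
        rw [hS]
        exact Finset.mem_image_of_mem _
          (by rwa [SimpleGraph.mem_edgeFinset, SimpleGraph.mem_edgeSet])
      have h3 := h2 _ hmem
      rwa [Sym2.map_pair_eq] at h3
  -- the numerator
  rw [probHG, validGammas_eq]
  have hNum : ∀ γ : Fin n → Finset (Fin n),
      (∑ β : Sym2 (Fin n) → Bool, (∏ e : Sym2 (Fin n), if β e then p else 1 - p)
        * (if (∀ i j : Fin r, T.Adj i j → adjHG n γ β (c i) (c j)) then (1:ℝ) else 0))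
      = (if (∀ i j : Fin r, T.Adj i j → ((c j) ∈ γ (c i) ∨ (c i) ∈ γ (c j)))
          then (1:ℝ) else 0) * p ^ (r - 1) := by
    intro γ
    have e1 : ∀ β : Sym2 (Fin n) → Bool,
        (∏ e : Sym2 (Fin n), if β e then p else 1 - p)
          * (if (∀ i j : Fin r, T.Adj i j → adjHG n γ β (c i) (c j)) then (1:ℝ) else 0)
        = (if (∀ i j : Fin r, T.Adj i j → ((c j) ∈ γ (c i) ∨ (c i) ∈ γ (c j)))
            then (1:ℝ) else 0)
          * ((∏ e : Sym2 (Fin n), if β e then p else 1 - p)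
              * (if (∀ e ∈ S, β e = true) then (1:ℝ) else 0)) := by
      intro β
      rw [hsplit γ β]
      ring
    rw [Finset.sum_congr rfl fun β _ => e1 β, ← Finset.mul_sum, beta_sum, hScard]
  -- bound the gamma sum by lemA
  have hpoint : ∀ γ : Fin n → Finset (Fin n),
      (if (∀ i j : Fin r, T.Adj i j → ((c j) ∈ γ (c i) ∨ (c i) ∈ γ (c j)))
          then (1:ℝ) else 0)
      ≤ (if ∀ q ∈ L, (q.2 ∈ γ q.1 ∨ q.1 ∈ γ q.2) then (1:ℝ) else 0) := by
    intro γ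
    by_cases h1 : ∀ i j : Fin r, T.Adj i j → ((c j) ∈ γ (c i) ∨ (c i) ∈ γ (c j))
    · have h2 : ∀ q ∈ L, (q.2 ∈ γ q.1 ∨ q.1 ∈ γ q.2) := by
        intro q hq
        rw [hL, List.mem_map] at hq
        obtain ⟨a, ha, rfl⟩ := hq
        exact h1 a.1 a.2 (hL0adj a ha)
      rw [if_pos h1, if_pos h2]
    · rw [if_neg h1]
      split_ifs <;> norm_num
  have hgamma : ∑ γ ∈ Fintype.piFinset (gamP n K),
      (if (∀ i j : Fin r, T.Adj i j → ((c j) ∈ γ (c i) ∨ (c i) ∈ γ (c j)))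
        then (1:ℝ) else 0)
      ≤ lam ^ (r - 1) * ((Fintype.piFinset (gamP n K)).card : ℝ) := by
    calc ∑ γ ∈ Fintype.piFinset (gamP n K),
        (if (∀ i j : Fin r, T.Adj i j → ((c j) ∈ γ (c i) ∨ (c i) ∈ γ (c j)))
          then (1:ℝ) else 0)
        ≤ ∑ γ ∈ Fintype.piFinset (gamP n K),
            (if ∀ q ∈ L, (q.2 ∈ γ q.1 ∨ q.1 ∈ γ q.2) then (1:ℝ) else 0) :=
          Finset.sum_le_sum fun γ _ => hpoint γ
      _ ≤ lam ^ L.length * ((Fintype.piFinset (gamP n K)).card : ℝ) :=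
          lemA hn hK1 hKn L hLfresh
      _ = lam ^ (r - 1) * ((Fintype.piFinset (gamP n K)).card : ℝ) := by rw [hLlen]
  have hNpos : (0:ℝ) < ((Fintype.piFinset (gamP n K)).card : ℝ) := by
    have h0 : 0 < (Fintype.piFinset (gamP n K)).card := by
      rw [Fintype.card_piFinset]
      apply Finset.prod_pos
      intro i _
      rw [gamP, Finset.card_powersetCard, Finset.card_erase_of_mem (Finset.mem_univ i),
        Finset.card_univ, Fintype.card_fin]
      exact Nat.choose_pos (by omega)
    exact_mod_cast h0
  rw [div_le_iff₀ hNpos]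
  have hps : (0:ℝ) ≤ p ^ (r - 1) := by positivity
  have final : (∑ γ ∈ Fintype.piFinset (gamP n K),
        ∑ β : Sym2 (Fin n) → Bool,
          (∏ e : Sym2 (Fin n), if β e then p else 1 - p) *
            (if ∀ i j : Fin r, T.Adj i j → adjHG n γ β (c i) (c j) then (1:ℝ) else 0))
      ≤ (p * lam) ^ (r - 1) * ((Fintype.piFinset (gamP n K)).card : ℝ) := by
    calc (∑ γ ∈ Fintype.piFinset (gamP n K),
        ∑ β : Sym2 (Fin n) → Bool,
          (∏ e : Sym2 (Fin n), if β e then p else 1 - p) *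
            (if ∀ i j : Fin r, T.Adj i j → adjHG n γ β (c i) (c j) then (1:ℝ) else 0))
      = ∑ γ ∈ Fintype.piFinset (gamP n K),
          (if (∀ i j : Fin r, T.Adj i j → ((c j) ∈ γ (c i) ∨ (c i) ∈ γ (c j)))
            then (1:ℝ) else 0) * p ^ (r - 1) := Finset.sum_congr rfl fun γ _ => hNum γ
    _ = p ^ (r - 1) * ∑ γ ∈ Fintype.piFinset (gamP n K),
          (if (∀ i j : Fin r, T.Adj i j → ((c j) ∈ γ (c i) ∨ (c i) ∈ γ (c j)))
            then (1:ℝ) else 0) := by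
        rw [Finset.mul_sum]
        exact Finset.sum_congr rfl fun γ _ => mul_comm _ _
    _ ≤ p ^ (r - 1) * (lam ^ (r - 1) * ((Fintype.piFinset (gamP n K)).card : ℝ)) :=
        mul_le_mul_of_nonneg_left hgamma hps
    _ = (p * lam) ^ (r - 1) * ((Fintype.piFinset (gamP n K)).card : ℝ) := by
        rw [mul_pow]; ring
  refine le_trans (le_of_eq ?_) final
  refine Finset.sum_congr rfl fun γ _ => Finset.sum_congr rfl fun β _ => ?_
  by_cases h : ∀ i j : Fin r, T.Adj i j → adjHG n γ β (c i) (c j)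
  · rw [if_pos h, if_pos h]
  · rw [if_neg h, if_neg h]
end
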